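/- Error bound for the calculus quotient approximation: under the hypotheses that f, g are C³ on B(x⁰, Δ̄) with Hessian Lipschitz constants L_f, L_g, g(x⁰) ≠ 0, X has radius Δ < Δ̄, S has full rank, and U = span S, the approximation ∇ᶜᶜ(f/g)(X) := (g(x⁰)∇ᶜf(X) − f(x⁰)∇ᶜg(X))/g(x⁰)² satisfies ‖∇ᶜᶜ(f/g)(X) − ∇(f/g)_U(x⁰)‖ ≤ (√m/6)(L_f/|g(x⁰)| + L_g|f(x⁰)|/g(x⁰)²)‖(Ŝᵀ)†‖Δ². -/

import Mathlib

open Metric Matrix Set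

/-- `B` is the Moore–Penrose pseudoinverse of `A`: the four Penrose equations. -/
def IsMPInv {n m : Type*} [Fintype n] [Fintype m]
    (A : Matrix n m ℝ) (B : Matrix m n ℝ) : Prop :=
  A * B * A = A ∧ B * A * B = B ∧ (A * B)ᵀ = A * B ∧ (B * A)ᵀ = B * A

/-- The ℓ²→ℓ² operator (spectral) norm of a real matrix. -/
noncomputable def opNorm {a b : ℕ} (A : Matrix (Fin a) (Fin b) ℝ) : ℝ :=
  ‖LinearMap.toContinuousLinearMap (Matrix.toEuclideanLin A)‖

lemma centered_diff_bound {n : ℕ} (h : EuclideanSpace ℝ (Fin n) → ℝ)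
    (x₀ v : EuclideanSpace ℝ (Fin n)) (Δbar L : ℝ)
    (hh : ContDiffOn ℝ 3 h (ball x₀ Δbar))
    (hL : ∀ x ∈ ball x₀ Δbar, ∀ y ∈ ball x₀ Δbar,
      ‖fderiv ℝ (fderiv ℝ h) x - fderiv ℝ (fderiv ℝ h) y‖ ≤ L * ‖x - y‖)
    (hv : ‖v‖ < Δbar) :
    |(h (x₀ + v) - h (x₀ - v)) / 2 - fderiv ℝ h x₀ v| ≤ L * ‖v‖ ^ 3 / 6 := by
  have hball : IsOpen (ball x₀ Δbar) := isOpen_ball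
  have hsm : ∀ t ∈ Icc (0:ℝ) 1, ‖t • v‖ < Δbar := by
    intro t ht
    calc ‖t • v‖ = |t| * ‖v‖ := by rw [norm_smul, Real.norm_eq_abs]
    _ ≤ 1 * ‖v‖ := by
        apply mul_le_mul_of_nonneg_right _ (norm_nonneg v)
        rw [abs_le]; exact ⟨by linarith [ht.1], ht.2⟩
    _ < Δbar := by rw [one_mul]; exact hv
  have hmemp : ∀ t ∈ Icc (0:ℝ) 1, x₀ + t • v ∈ ball x₀ Δbar := by
    intro t ht
    simp only [mem_ball, dist_eq_norm, add_sub_cancel_left]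
    exact hsm t ht
  have hmemq : ∀ t ∈ Icc (0:ℝ) 1, x₀ - t • v ∈ ball x₀ Δbar := by
    intro t ht
    simp only [mem_ball, dist_eq_norm, sub_sub_cancel_left, norm_neg]
    exact hsm t ht
  have hd1 : ∀ x ∈ ball x₀ Δbar, HasFDerivAt h (fderiv ℝ h x) x := by
    intro x hx
    exact ((hh.contDiffAt (hball.mem_nhds hx)).differentiableAt (by norm_num)).hasFDerivAt
  have hh2 : ContDiffOn ℝ 2 (fderiv ℝ h) (ball x₀ Δbar) :=
    hh.fderiv_of_isOpen hball (by norm_num)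
  have hd2 : ∀ x ∈ ball x₀ Δbar,
      HasFDerivAt (fderiv ℝ h) (fderiv ℝ (fderiv ℝ h) x) x := by
    intro x hx
    exact ((hh2.contDiffAt (hball.mem_nhds hx)).differentiableAt (by norm_num)).hasFDerivAt
  have hp : ∀ t : ℝ, HasDerivAt (fun t : ℝ => x₀ + t • v) v t := by
    intro t
    simpa using (((hasDerivAt_id t).smul_const v).const_add x₀)
  have hq : ∀ t : ℝ, HasDerivAt (fun t : ℝ => x₀ - t • v) (-v) t := by
    intro t
    simpa using (((hasDerivAt_id t).smul_const v).const_sub x₀)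
  set c : ℝ := fderiv ℝ h x₀ v with hc
  set ψ : ℝ → ℝ := fun t =>
    fderiv ℝ h (x₀ + t • v) v + fderiv ℝ h (x₀ - t • v) v - 2 * c with hψdef
  set ψ' : ℝ → ℝ := fun t =>
    (fderiv ℝ (fderiv ℝ h) (x₀ + t • v) v) v
      - (fderiv ℝ (fderiv ℝ h) (x₀ - t • v) v) v with hψ'def
  have hψ : ∀ t ∈ Icc (0:ℝ) 1, HasDerivAt ψ (ψ' t) t := by
    intro t ht
    have h1 : HasDerivAt (fun t : ℝ => fderiv ℝ h (x₀ + t • v))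
        (fderiv ℝ (fderiv ℝ h) (x₀ + t • v) v) t :=
      (hd2 _ (hmemp t ht)).comp_hasDerivAt t (hp t)
    have h2 : HasDerivAt (fun t : ℝ => fderiv ℝ h (x₀ - t • v))
        (fderiv ℝ (fderiv ℝ h) (x₀ - t • v) (-v)) t :=
      (hd2 _ (hmemq t ht)).comp_hasDerivAt t (hq t)
    have h1' := h1.clm_apply (hasDerivAt_const t v)
    have h2' := h2.clm_apply (hasDerivAt_const t v)
    simp only [smul_zero, add_zero, map_zero, map_neg, ContinuousLinearMap.neg_apply] at h1' h2'
    have hres := (h1'.add h2').sub_const (2 * c)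
    convert hres using 1 <;> (first | rfl | (simp only [hψ'def]; ring))
  have hψ0 : ψ 0 = 0 := by
    simp only [hψdef, hc, zero_smul, add_zero, sub_zero]; ring
  have key1 : ∀ t ∈ Icc (0:ℝ) 1, ‖ψ t‖ ≤ L * ‖v‖ ^ 3 * t ^ 2 := by
    have hcont : ContinuousOn ψ (Icc 0 1) := fun t ht =>
      (hψ t ht).continuousAt.continuousWithinAt
    have hderiv : ∀ t ∈ Ico (0:ℝ) 1, HasDerivWithinAt ψ (ψ' t) (Ici t) t := fun t ht =>
      (hψ t (mem_Icc_of_Ico ht)).hasDerivWithinAt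
    have hB : ∀ t : ℝ, HasDerivAt (fun t => L * ‖v‖ ^ 3 * t ^ 2) (L * ‖v‖ ^ 3 * (2 * t)) t := by
      intro t
      have := (hasDerivAt_pow 2 t).const_mul (L * ‖v‖ ^ 3)
      exact this.congr_deriv (by push_cast; ring)
    have hbound : ∀ t ∈ Ico (0:ℝ) 1, ‖ψ' t‖ ≤ L * ‖v‖ ^ 3 * (2 * t) := by
      intro t ht
      have ht' := mem_Icc_of_Ico ht
      have hLb := hL _ (hmemp t ht') _ (hmemq t ht')
      have hdiff : (x₀ + t • v) - (x₀ - t • v) = (2 * t) • v := by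
        rw [two_mul, add_smul]; abel
      rw [hdiff, norm_smul, Real.norm_eq_abs,
        abs_of_nonneg (by linarith [ht.1] : (0:ℝ) ≤ 2 * t)] at hLb
      set A := fderiv ℝ (fderiv ℝ h) (x₀ + t • v) - fderiv ℝ (fderiv ℝ h) (x₀ - t • v) with hA
      have heq : ψ' t = (A v) v := by simp [hψ'def, hA]
      rw [Real.norm_eq_abs, heq]
      calc |(A v) v| ≤ ‖A v‖ * ‖v‖ := (A v).le_opNorm v
      _ ≤ (‖A‖ * ‖v‖) * ‖v‖ :=
          mul_le_mul_of_nonneg_right (A.le_opNorm v) (norm_nonneg v)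
      _ ≤ ((L * (2 * t * ‖v‖)) * ‖v‖) * ‖v‖ :=
          mul_le_mul_of_nonneg_right
            (mul_le_mul_of_nonneg_right hLb (norm_nonneg v)) (norm_nonneg v)
      _ = L * ‖v‖ ^ 3 * (2 * t) := by ring
    intro t ht
    exact image_norm_le_of_norm_deriv_right_le_deriv_boundary hcont hderiv
      (by simp [hψ0]) hB hbound ht
  set φ : ℝ → ℝ := fun t => h (x₀ + t • v) - h (x₀ - t • v) - (2 * c) * t with hφdef
  have hφ : ∀ t ∈ Icc (0:ℝ) 1, HasDerivAt φ (ψ t) t := by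
    intro t ht
    have h1 : HasDerivAt (fun t : ℝ => h (x₀ + t • v)) (fderiv ℝ h (x₀ + t • v) v) t :=
      (hd1 _ (hmemp t ht)).comp_hasDerivAt t (hp t)
    have h2 : HasDerivAt (fun t : ℝ => h (x₀ - t • v)) (fderiv ℝ h (x₀ - t • v) (-v)) t :=
      (hd1 _ (hmemq t ht)).comp_hasDerivAt t (hq t)
    have h3 : HasDerivAt (fun t : ℝ => (2 * c) * t) (2 * c) t := by
      simpa using (hasDerivAt_id t).const_mul (2 * c)
    have hres := (h1.sub h2).sub h3
    rw [map_neg] at hres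
    convert hres using 1 <;> (first | rfl | (simp only [hψdef]; ring))
  have key2 : ∀ t ∈ Icc (0:ℝ) 1, ‖φ t‖ ≤ L * ‖v‖ ^ 3 * t ^ 3 / 3 := by
    have hcont : ContinuousOn φ (Icc 0 1) := fun t ht =>
      (hφ t ht).continuousAt.continuousWithinAt
    have hderiv : ∀ t ∈ Ico (0:ℝ) 1, HasDerivWithinAt φ (ψ t) (Ici t) t := fun t ht =>
      (hφ t (mem_Icc_of_Ico ht)).hasDerivWithinAt
    have hB : ∀ t : ℝ, HasDerivAt (fun t => L * ‖v‖ ^ 3 * t ^ 3 / 3) (L * ‖v‖ ^ 3 * t ^ 2) t := by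
      intro t
      have := ((hasDerivAt_pow 3 t).const_mul (L * ‖v‖ ^ 3)).div_const 3
      exact this.congr_deriv (by push_cast; ring)
    have hbound : ∀ t ∈ Ico (0:ℝ) 1, ‖ψ t‖ ≤ L * ‖v‖ ^ 3 * t ^ 2 := fun t ht =>
      key1 t (mem_Icc_of_Ico ht)
    intro t ht
    exact image_norm_le_of_norm_deriv_right_le_deriv_boundary hcont hderiv
      (by simp [hφdef]) hB hbound ht
  have hk := key2 1 (by norm_num)
  rw [Real.norm_eq_abs] at hk
  have hφ1 : φ 1 = h (x₀ + v) - h (x₀ - v) - 2 * c := by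
    simp only [hφdef, one_smul, mul_one]
  rw [hφ1] at hk
  rw [abs_le] at hk ⊢
  constructor
  · rw [hc] at hk ⊢; linarith [hk.1]
  · rw [hc] at hk ⊢; linarith [hk.2]

set_option maxHeartbeats 1600000 in
theorem gcscg_quotient_error_bound {n m : ℕ}
    (f g : EuclideanSpace ℝ (Fin n) → ℝ)
    (x₀ : EuclideanSpace ℝ (Fin n)) (Δbar Lf Lg Δ : ℝ)
    (hf : ContDiffOn ℝ 3 f (ball x₀ Δbar)) (hg : ContDiffOn ℝ 3 g (ball x₀ Δbar))
    (hLf : ∀ x ∈ ball x₀ Δbar, ∀ y ∈ ball x₀ Δbar,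
      ‖fderiv ℝ (fderiv ℝ f) x - fderiv ℝ (fderiv ℝ f) y‖ ≤ Lf * ‖x - y‖)
    (hLg : ∀ x ∈ ball x₀ Δbar, ∀ y ∈ ball x₀ Δbar,
      ‖fderiv ℝ (fderiv ℝ g) x - fderiv ℝ (fderiv ℝ g) y‖ ≤ Lg * ‖x - y‖)
    (hg₀ : g x₀ ≠ 0)
    (d : Fin m → EuclideanSpace ℝ (Fin n))
    (hΔ : ∀ i, ‖d i‖ ≤ Δ) (hΔpos : 0 < Δ) (hΔbar : Δ < Δbar)
    (S : Matrix (Fin n) (Fin m) ℝ) (hS : S = Matrix.of fun j i => d i j)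
    (hrank : S.rank = m ∨ S.rank = n)
    (P : Matrix (Fin n) (Fin m) ℝ) (hP : IsMPInv Sᵀ P) :
    ‖(WithLp.equiv 2 (Fin n → ℝ)).symm fun j =>
        ((g x₀ ^ 2)⁻¹ •
          (g x₀ • P.mulVec (fun i => (f (x₀ + d i) - f (x₀ - d i)) / 2) -
            f x₀ • P.mulVec fun i => (g (x₀ + d i) - g (x₀ - d i)) / 2)) j -
          (P * Sᵀ).mulVec
            (WithLp.equiv 2 (Fin n → ℝ) (gradient (fun y => f y / g y) x₀)) j‖ ≤
      Real.sqrt m / 6 * (Lf / |g x₀| + Lg * |f x₀| / g x₀ ^ 2) *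
        opNorm (Δ • P) * Δ ^ 2 := by
  by_cases hn : n = 0
  · subst hn
    have hL0 : ‖(WithLp.equiv 2 (Fin 0 → ℝ)).symm fun j =>
        ((g x₀ ^ 2)⁻¹ •
          (g x₀ • P.mulVec (fun i => (f (x₀ + d i) - f (x₀ - d i)) / 2) -
            f x₀ • P.mulVec fun i => (g (x₀ + d i) - g (x₀ - d i)) / 2)) j -
          (P * Sᵀ).mulVec
            (WithLp.equiv 2 (Fin 0 → ℝ) (gradient (fun y => f y / g y) x₀)) j‖ = 0 := by
      rw [EuclideanSpace.norm_eq]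
      simp
    rw [hL0]
    have hP0 : opNorm (Δ • P) = 0 := by
      unfold opNorm
      have hz : ∀ x : EuclideanSpace ℝ (Fin 0), x = 0 := by
        intro x; ext i; exact i.elim0
      have : (LinearMap.toContinuousLinearMap (Matrix.toEuclideanLin (Δ • P))) = 0 := by
        apply ContinuousLinearMap.ext
        intro x
        rw [hz (LinearMap.toContinuousLinearMap (Matrix.toEuclideanLin (Δ • P)) x),
          ContinuousLinearMap.zero_apply]
      rw [this, norm_zero]
    rw [hP0]
    simp
  -- main case
  have hnpos : 0 < n := Nat.pos_of_ne_zero hn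
  have hΔbarpos : 0 < Δbar := lt_trans hΔpos hΔbar
  have hx₀mem : x₀ ∈ ball x₀ Δbar := mem_ball_self hΔbarpos
  -- nonnegativity of Lipschitz constants
  have key0 : ∀ (h : EuclideanSpace ℝ (Fin n) → ℝ) (L : ℝ),
      (∀ x ∈ ball x₀ Δbar, ∀ y ∈ ball x₀ Δbar,
        ‖fderiv ℝ (fderiv ℝ h) x - fderiv ℝ (fderiv ℝ h) y‖ ≤ L * ‖x - y‖) → 0 ≤ L := by
    intro h L hL
    set i₀ : Fin n := ⟨0, hnpos⟩
    set y : EuclideanSpace ℝ (Fin n)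
      := x₀ + (Δbar / 2) • (EuclideanSpace.single i₀ (1:ℝ)) with hy
    have hns : ‖(Δbar / 2) • (EuclideanSpace.single i₀ (1:ℝ))‖ = Δbar / 2 := by
      rw [norm_smul, Real.norm_eq_abs, EuclideanSpace.norm_single, norm_one,
        mul_one, abs_of_pos (by linarith)]
    have hymem : y ∈ ball x₀ Δbar := by
      rw [hy, mem_ball, dist_eq_norm, add_sub_cancel_left, hns]
      linarith
    have h1 := hL x₀ hx₀mem y hymem
    have h2 : ‖x₀ - y‖ = Δbar / 2 := by
      rw [hy, sub_add_cancel_left, norm_neg, hns]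
    rw [h2] at h1
    nlinarith [norm_nonneg (fderiv ℝ (fderiv ℝ h) x₀ - fderiv ℝ (fderiv ℝ h) y)]
  have hLf0 : 0 ≤ Lf := key0 f Lf hLf
  have hLg0 : 0 ≤ Lg := key0 g Lg hLg
  -- per-coordinate centered difference bounds
  have hef : ∀ i, |(f (x₀ + d i) - f (x₀ - d i)) / 2 - fderiv ℝ f x₀ (d i)|
      ≤ Lf * Δ ^ 3 / 6 := by
    intro i
    refine (centered_diff_bound f x₀ (d i) Δbar Lf hf hLf
      (lt_of_le_of_lt (hΔ i) hΔbar)).trans ?_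
    have h3 : ‖d i‖ ^ 3 ≤ Δ ^ 3 := pow_le_pow_left₀ (norm_nonneg _) (hΔ i) 3
    nlinarith
  have heg : ∀ i, |(g (x₀ + d i) - g (x₀ - d i)) / 2 - fderiv ℝ g x₀ (d i)|
      ≤ Lg * Δ ^ 3 / 6 := by
    intro i
    refine (centered_diff_bound g x₀ (d i) Δbar Lg hg hLg
      (lt_of_le_of_lt (hΔ i) hΔbar)).trans ?_
    have h3 : ‖d i‖ ^ 3 ≤ Δ ^ 3 := pow_le_pow_left₀ (norm_nonneg _) (hΔ i) 3
    nlinarith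
  -- fderiv of the quotient
  have hfd : DifferentiableAt ℝ f x₀ :=
    (hf.contDiffAt (isOpen_ball.mem_nhds hx₀mem)).differentiableAt (by norm_num)
  have hgd : DifferentiableAt ℝ g x₀ :=
    (hg.contDiffAt (isOpen_ball.mem_nhds hx₀mem)).differentiableAt (by norm_num)
  have hqD : HasFDerivAt (fun y => f y / g y)
      (f x₀ • ((-(g x₀ ^ 2)⁻¹) • fderiv ℝ g x₀) + (g x₀)⁻¹ • fderiv ℝ f x₀) x₀ := by
    have hinv : HasFDerivAt (fun y => (g y)⁻¹) ((-(g x₀ ^ 2)⁻¹) • fderiv ℝ g x₀) x₀ := by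
      have := (hasDerivAt_inv hg₀).comp_hasFDerivAt x₀ hgd.hasFDerivAt
      exact this
    have := hfd.hasFDerivAt.mul hinv
    exact this
  have hq' : ∀ v : EuclideanSpace ℝ (Fin n), fderiv ℝ (fun y => f y / g y) x₀ v
      = (g x₀ ^ 2)⁻¹ * (g x₀ * fderiv ℝ f x₀ v - f x₀ * fderiv ℝ g x₀ v) := by
    intro v
    rw [hqD.fderiv]
    simp only [ContinuousLinearMap.add_apply, ContinuousLinearMap.coe_smul',
      Pi.smul_apply, smul_eq_mul]
    field_simp
    ring
  -- gradient entries
  have hgradval : ∀ v : EuclideanSpace ℝ (Fin n),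
      fderiv ℝ (fun y => f y / g y) x₀ v
        = ∑ j, (gradient (fun y => f y / g y) x₀) j * v j := by
    intro v
    have h1 : fderiv ℝ (fun y => f y / g y) x₀ v
        = (InnerProductSpace.toDual ℝ (EuclideanSpace ℝ (Fin n)))
            ((InnerProductSpace.toDual ℝ (EuclideanSpace ℝ (Fin n))).symm
              (fderiv ℝ (fun y => f y / g y) x₀)) v := by
      rw [LinearIsometryEquiv.apply_symm_apply]
    rw [h1, InnerProductSpace.toDual_apply_apply]
    have h2 : gradient (fun y => f y / g y) x₀
        = (InnerProductSpace.toDual ℝ (EuclideanSpace ℝ (Fin n))).symm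
            (fderiv ℝ (fun y => f y / g y) x₀) := rfl
    rw [← h2]
    simp only [PiLp.inner_apply, RCLike.inner_apply, conj_trivial]
    exact Finset.sum_congr rfl fun j _ => by ring
  -- the error vector
  set w : Fin m → ℝ := fun i =>
    (g x₀ ^ 2)⁻¹ * (g x₀ * ((f (x₀ + d i) - f (x₀ - d i)) / 2 - fderiv ℝ f x₀ (d i))
      - f x₀ * ((g (x₀ + d i) - g (x₀ - d i)) / 2 - fderiv ℝ g x₀ (d i))) with hw
  have hSt : Sᵀ.mulVec (WithLp.equiv 2 (Fin n → ℝ) (gradient (fun y => f y / g y) x₀))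
      = fun i => (g x₀ ^ 2)⁻¹ * (g x₀ * fderiv ℝ f x₀ (d i) - f x₀ * fderiv ℝ g x₀ (d i)) := by
    funext i
    have hent : Sᵀ.mulVec (WithLp.equiv 2 (Fin n → ℝ)
        (gradient (fun y => f y / g y) x₀)) i
        = ∑ j, (gradient (fun y => f y / g y) x₀) j * (d i) j := by
      simp only [Matrix.mulVec, dotProduct, Matrix.transpose_apply, hS, Matrix.of_apply,
        WithLp.equiv_apply]
      exact Finset.sum_congr rfl fun j _ => mul_comm _ _
    rw [hent, ← hgradval (d i), hq' (d i)]
  have hfun : (fun j =>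
        ((g x₀ ^ 2)⁻¹ •
          (g x₀ • P.mulVec (fun i => (f (x₀ + d i) - f (x₀ - d i)) / 2) -
            f x₀ • P.mulVec fun i => (g (x₀ + d i) - g (x₀ - d i)) / 2)) j -
          (P * Sᵀ).mulVec
            (WithLp.equiv 2 (Fin n → ℝ) (gradient (fun y => f y / g y) x₀)) j)
      = P.mulVec w := by
    funext j
    rw [← Matrix.mulVec_mulVec, hSt]
    simp only [Pi.smul_apply, Pi.sub_apply, smul_eq_mul, Matrix.mulVec, dotProduct, hw]
    rw [Finset.mul_sum, Finset.mul_sum, ← Finset.sum_sub_distrib, Finset.mul_sum,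
      ← Finset.sum_sub_distrib]
    exact Finset.sum_congr rfl fun i _ => by ring
  rw [hfun]
  -- operator norm bound
  have hA : ‖(WithLp.equiv 2 (Fin n → ℝ)).symm (P.mulVec w)‖
      ≤ opNorm P * ‖(WithLp.equiv 2 (Fin m → ℝ)).symm w‖ := by
    have h1 := (LinearMap.toContinuousLinearMap (Matrix.toEuclideanLin P)).le_opNorm
      ((WithLp.equiv 2 (Fin m → ℝ)).symm w)
    have h2 : (LinearMap.toContinuousLinearMap (Matrix.toEuclideanLin P))
        ((WithLp.equiv 2 (Fin m → ℝ)).symm w)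
        = (WithLp.equiv 2 (Fin n → ℝ)).symm (P.mulVec w) := by
      rw [show ⇑(LinearMap.toContinuousLinearMap (Matrix.toEuclideanLin P))
          = ⇑(Matrix.toEuclideanLin P) from LinearMap.coe_toContinuousLinearMap' _]
      exact Matrix.toEuclideanLin_apply_piLp_toLp P w
    rw [h2] at h1
    exact h1
  -- entrywise bound
  set C : ℝ := (g x₀ ^ 2)⁻¹ * (|g x₀| * (Lf * Δ ^ 3 / 6) + |f x₀| * (Lg * Δ ^ 3 / 6)) with hC
  have hC0 : 0 ≤ C := by
    rw [hC]
    have := abs_nonneg (g x₀)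
    have := abs_nonneg (f x₀)
    positivity
  have hwbound : ∀ i, |w i| ≤ C := by
    intro i
    rw [hw]
    simp only
    rw [abs_mul, abs_of_nonneg (by positivity : (0:ℝ) ≤ (g x₀ ^ 2)⁻¹)]
    rw [hC]
    apply mul_le_mul_of_nonneg_left _ (by positivity)
    calc |g x₀ * ((f (x₀ + d i) - f (x₀ - d i)) / 2 - fderiv ℝ f x₀ (d i))
        - f x₀ * ((g (x₀ + d i) - g (x₀ - d i)) / 2 - fderiv ℝ g x₀ (d i))|
        ≤ |g x₀ * ((f (x₀ + d i) - f (x₀ - d i)) / 2 - fderiv ℝ f x₀ (d i))|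
          + |f x₀ * ((g (x₀ + d i) - g (x₀ - d i)) / 2 - fderiv ℝ g x₀ (d i))| :=
          abs_sub _ _
      _ = |g x₀| * |(f (x₀ + d i) - f (x₀ - d i)) / 2 - fderiv ℝ f x₀ (d i)|
          + |f x₀| * |(g (x₀ + d i) - g (x₀ - d i)) / 2 - fderiv ℝ g x₀ (d i)| := by
          rw [abs_mul, abs_mul]
      _ ≤ |g x₀| * (Lf * Δ ^ 3 / 6) + |f x₀| * (Lg * Δ ^ 3 / 6) :=
          add_le_add (mul_le_mul_of_nonneg_left (hef i) (abs_nonneg _))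
            (mul_le_mul_of_nonneg_left (heg i) (abs_nonneg _))
  have hwnorm : ‖(WithLp.equiv 2 (Fin m → ℝ)).symm w‖ ≤ Real.sqrt m * C := by
    rw [EuclideanSpace.norm_eq]
    have hsum : ∑ i, ‖((WithLp.equiv 2 (Fin m → ℝ)).symm w) i‖ ^ 2
        ≤ (m : ℝ) * C ^ 2 := by
      calc ∑ i, ‖((WithLp.equiv 2 (Fin m → ℝ)).symm w) i‖ ^ 2
          ≤ ∑ _i : Fin m, C ^ 2 := by
            apply Finset.sum_le_sum
            intro i _
            rw [WithLp.equiv_symm_apply, PiLp.toLp_apply, Real.norm_eq_abs]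
            exact pow_le_pow_left₀ (abs_nonneg _) (hwbound i) 2
        _ = (m : ℝ) * C ^ 2 := by
            rw [Finset.sum_const, Finset.card_univ, Fintype.card_fin, nsmul_eq_mul]
    calc Real.sqrt (∑ i, ‖((WithLp.equiv 2 (Fin m → ℝ)).symm w) i‖ ^ 2)
        ≤ Real.sqrt ((m : ℝ) * C ^ 2) := Real.sqrt_le_sqrt hsum
      _ = Real.sqrt m * C := by
          rw [Real.sqrt_mul (Nat.cast_nonneg m), Real.sqrt_sq hC0]
  have hop : opNorm (Δ • P) = Δ * opNorm P := by
    unfold opNorm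
    have e1 : Matrix.toEuclideanLin (Δ • P) = Δ • Matrix.toEuclideanLin P :=
      _root_.map_smul _ _ _
    have e2 : LinearMap.toContinuousLinearMap (Δ • Matrix.toEuclideanLin P)
        = Δ • LinearMap.toContinuousLinearMap (Matrix.toEuclideanLin P) :=
      _root_.map_smul _ _ _
    rw [e1, e2, norm_smul Δ (LinearMap.toContinuousLinearMap (Matrix.toEuclideanLin P)),
      Real.norm_eq_abs, abs_of_pos hΔpos]
  -- final arithmetic
  have habs : 0 < |g x₀| := abs_pos.mpr hg₀
  have hgsq : g x₀ ^ 2 = |g x₀| ^ 2 := (sq_abs _).symm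
  have hfinal : opNorm P * (Real.sqrt m * C)
      = Real.sqrt m / 6 * (Lf / |g x₀| + Lg * |f x₀| / g x₀ ^ 2) * opNorm (Δ • P) * Δ ^ 2 := by
    rw [hop, hC, hgsq]
    field_simp
  calc ‖(WithLp.equiv 2 (Fin n → ℝ)).symm (P.mulVec w)‖
      ≤ opNorm P * ‖(WithLp.equiv 2 (Fin m → ℝ)).symm w‖ := hA
    _ ≤ opNorm P * (Real.sqrt m * C) := by
        apply mul_le_mul_of_nonneg_left hwnorm (norm_nonneg _)
    _ = _ := hfinal
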